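/- There exists a function insert from budzippers, nonempty keys, and values to optional budzippers such that for every budzipper z = (p, n) satisfying the zipper invariants, every key k ≠ [], and every value v, writing l = modelize_node(n): if k does not occur among the keys of l and {k} together with the keys of l is prefix-free, then insert(z, k, v) = Some z' for some budzipper z' = (p', n') satisfying the zipper invariants with modelize_path(p') = modelize_path(p), and with modelize_node(n') having a prefix-free, strictly lexicographically increasing key list, lookup(modelize_node(n'), k) = Some (Value v), and lookup(modelize_node(n'), k') = lookup(l, k') for every key k' ≠ k; and otherwise insert(z, k, v) = None. -/

import Mathlib

/-- A side is `L` or `R`. -/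
inductive Side : Type
  | L | R
deriving DecidableEq, Repr

/-- A key is a list of sides. -/
abbrev Key := List Side

/-- The strict order `L < R` on sides. -/
def Side.lt : Side → Side → Prop := fun a b => a = Side.L ∧ b = Side.R

/-- The strict lexicographic order on keys induced by `L < R`. -/
def keyLt : Key → Key → Prop := List.Lex Side.lt

/-- A list of keys is prefix-free: for any two distinct keys in it,
neither is a prefix of the other. -/
def PrefixFreeList (ks : List Key) : Prop :=
  List.Pairwise (fun a b => ¬ a <+: b ∧ ¬ b <+: a) ks

/-- A set of keys is prefix-free. -/
def PrefixFreeSet (S : Set Key) : Prop :=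
  ∀ a ∈ S, ∀ b ∈ S, a ≠ b → ¬ a <+: b

/-- A list of keys is strictly increasing in the lexicographic order. -/
def SortedKeys (ks : List Key) : Prop := List.Pairwise keyLt ks

/-- Key list of an association list is prefix-free and strictly increasing. -/
def GoodKeyList (ks : List Key) : Prop := PrefixFreeList ks ∧ SortedKeys ks

/-- Prepend the key `s` to the key of every entry. -/
def prependAll {β : Type _} (s : Key) (l : List (Key × β)) : List (Key × β) :=
  l.map (fun e => (s ++ e.1, e.2))

/-- `lookup l k` is `some` of the value of the first entry of `l` with key `k`. -/
def lookupA {β : Type _} (l : List (Key × β)) (k : Key) : Option β :=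
  (l.find? (fun e => decide (e.1 = k))).map Prod.snd
/-- Extended Plebeia tree nodes, over a value type `α`, index type `ι`, hash type `η`. -/
inductive PNode (α ι η : Type) : Type
  | leaf : α → Option ι → Option η → PNode α ι η
  | branch : PNode α ι η → PNode α ι η → Option ι → Option η → PNode α ι η
  | extender : Key → PNode α ι η → Option ι → PNode α ι η
  | bud : Option (PNode α ι η) → Option ι → Option η → PNode α ι η

variable {α ι η : Type}

def PNode.isExtender : PNode α ι η → Prop
  | .extender _ _ _ => True
  | _ => False

def PNode.isBud : PNode α ι η → Prop
  | .bud _ _ _ => True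
  | _ => False

def PNode.isLeaf : PNode α ι η → Prop
  | .leaf _ _ _ => True
  | _ => False

/-- A node is indexed if its `Option index` field is `Some`. -/
def PNode.indexed : PNode α ι η → Prop
  | .leaf _ oi _ => oi.isSome
  | .branch _ _ oi _ => oi.isSome
  | .extender _ _ oi => oi.isSome
  | .bud _ oi _ => oi.isSome

/-- A leaf/branch/bud is hashed if its `Option hash` field is `Some`;
an extender is hashed if its child is hashed. -/
def PNode.hashed : PNode α ι η → Prop
  | .leaf _ _ oh => oh.isSome
  | .branch _ _ _ oh => oh.isSome
  | .extender _ n _ => n.hashed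
  | .bud _ _ oh => oh.isSome

/-- Structural invariants (SI1)-(SI6) at every subtree. -/
def PNode.inv : PNode α ι η → Prop
  | .leaf _ _ _ => True
  | .branch l r oi oh =>
      (oh.isSome → (l.hashed ∧ r.hashed)) ∧        -- SI3
      (oi.isSome → oh.isSome = true) ∧             -- SI4
      (oi.isSome → (l.indexed ∧ r.indexed)) ∧      -- SI5
      l.inv ∧ r.inv
  | .extender s n oi =>
      (¬ n.isExtender) ∧                           -- SI1
      s ≠ [] ∧                                     -- SI2
      (oi.isSome → n.hashed) ∧                     -- SI4 (extender is hashed iff child is)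
      (oi.isSome → n.indexed) ∧                    -- SI5
      n.inv
  | .bud none oi oh => (oi.isSome → oh.isSome = true)  -- SI4
  | .bud (some n) oi oh =>
      (¬ n.isBud) ∧ (¬ n.isLeaf) ∧                 -- SI6
      (oh.isSome → n.hashed) ∧                     -- SI3
      (oi.isSome → oh.isSome = true) ∧             -- SI4
      (oi.isSome → n.indexed) ∧                    -- SI5
      n.inv

/-- Nested values: either a value or a nested key--value store (association list). -/
inductive NestedValue (α : Type) : Type
  | value : α → NestedValue α
  | map : List (Key × NestedValue α) → NestedValue α

/-- `modelize_node_aux`. -/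
def modelizeNodeAux : PNode α ι η → List (Key × NestedValue α)
  | .leaf v _ _ => [([], .value v)]
  | .branch l r _ _ =>
      prependAll [Side.L] (modelizeNodeAux l) ++ prependAll [Side.R] (modelizeNodeAux r)
  | .extender s n _ => prependAll s (modelizeNodeAux n)
  | .bud none _ _ => [([], .map [])]
  | .bud (some n) _ _ => [([], .map (modelizeNodeAux n))]
/-- Zipper paths over extended Plebeia nodes. -/
inductive ZPath (α ι η : Type) : Type
  | top : ZPath α ι η
  | left : ZPath α ι η → PNode α ι η → Option ι → Option η → ZPath α ι η
  | right : PNode α ι η → ZPath α ι η → Option ι → Option η → ZPath α ι η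
  | extended : ZPath α ι η → Key → Option ι → ZPath α ι η
  | budded : ZPath α ι η → Option ι → Option η → ZPath α ι η

def ZPath.isExtended : ZPath α ι η → Prop
  | .extended _ _ _ => True
  | _ => False

def ZPath.isBudded : ZPath α ι η → Prop
  | .budded _ _ _ => True
  | _ => False

/-- A `Left`/`Right`/`Budded` path is hashed iff its hash field is `Some`;
`Extended p s oi` is hashed iff `p` is; `Top` is not hashed. -/
def ZPath.hashed : ZPath α ι η → Prop
  | .top => False
  | .left _ _ _ oh => oh.isSome
  | .right _ _ _ oh => oh.isSome
  | .extended p _ _ => p.hashed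
  | .budded _ _ oh => oh.isSome

/-- A non-`Top` path is indexed iff its index field is `Some`. -/
def ZPath.indexed : ZPath α ι η → Prop
  | .top => False
  | .left _ _ oi _ => oi.isSome
  | .right _ _ oi _ => oi.isSome
  | .extended _ _ oi => oi.isSome
  | .budded _ oi _ => oi.isSome

/-- (ZI-ZPath). -/
def ZPath.inv : ZPath α ι η → Prop
  | .top => True
  | .left p' n' oi oh =>
      (p'.hashed → oh.isSome = true) ∧
      (oh.isSome → n'.hashed) ∧
      (p'.indexed → oi.isSome = true) ∧
      (oi.isSome → n'.indexed) ∧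
      (oi.isSome → oh.isSome = true) ∧
      n'.inv ∧ p'.inv
  | .right n' p' oi oh =>
      (p'.hashed → oh.isSome = true) ∧
      (oh.isSome → n'.hashed) ∧
      (p'.indexed → oi.isSome = true) ∧
      (oi.isSome → n'.indexed) ∧
      (oi.isSome → oh.isSome = true) ∧
      n'.inv ∧ p'.inv
  | .extended p' s oi =>
      (p'.indexed → oi.isSome = true) ∧
      (¬ p'.isExtended) ∧
      s ≠ [] ∧
      p'.inv
  | .budded p' oi oh =>
      (p'.hashed → oh.isSome = true) ∧
      (p'.indexed → oi.isSome = true) ∧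
      (oi.isSome → oh.isSome = true) ∧
      (¬ p'.isBudded) ∧
      p'.inv

/-- (ZI-Connect): the junction between the path and the cursor node is well-formed. -/
def ZPath.connect : ZPath α ι η → PNode α ι η → Prop
  | .top, _ => True
  | .left _ _ oi oh, n => (oh.isSome → n.hashed) ∧ (oi.isSome → n.indexed)
  | .right _ _ oi oh, n => (oh.isSome → n.hashed) ∧ (oi.isSome → n.indexed)
  | .extended p' _ oi, n =>
      (p'.hashed → n.hashed) ∧ (oi.isSome → n.indexed) ∧ (¬ n.isExtender)
  | .budded _ oi oh, n =>
      (oh.isSome → n.hashed) ∧ (oi.isSome → n.indexed) ∧ (¬ n.isBud) ∧ (¬ n.isLeaf)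

/-- The zipper invariants: (ZI-Node), (ZI-ZPath) and (ZI-Connect). -/
def zipperInv (p : ZPath α ι η) (n : PNode α ι η) : Prop :=
  n.inv ∧ p.inv ∧ p.connect n

/-- `go_up`: move the cursor of a zipper one step up. -/
def goUp : ZPath α ι η × PNode α ι η → Option (ZPath α ι η × PNode α ι η)
  | (.top, _) => none
  | (.left p n₂ oi oh, n) => some (p, .branch n n₂ oi oh)
  | (.right n₁ p oi oh, n) => some (p, .branch n₁ n oi oh)
  | (.extended p s oi, n) => some (p, .extender s n oi)
  | (.budded p oi oh, n) => some (p, .bud (some n) oi oh)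

/-- For a `Bud` node `n`, `modelize_node n` is the association list `m` such
that `modelize_node_aux n = [([], Map m)]`. -/
def modelizeNode (n : PNode α ι η) : List (Key × NestedValue α) :=
  match modelizeNodeAux n with
  | [(_, .map m)] => m
  | _ => []

/-- Number of frames of a path. -/
def ZPath.len : ZPath α ι η → Nat
  | .top => 0
  | .left p _ _ _ => p.len + 1
  | .right _ p _ _ => p.len + 1
  | .extended p _ _ => p.len + 1
  | .budded p _ _ => p.len + 1

/-- Apply `go_up` repeatedly until the node just produced is a `Bud` or the path
becomes `Top`. -/
def goUpToBudOrTop : ZPath α ι η → PNode α ι η → ZPath α ι η × PNode α ι η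
  | .top, n => (.top, n)
  | .left p n₂ oi oh, n => goUpToBudOrTop p (.branch n n₂ oi oh)
  | .right n₁ p oi oh, n => goUpToBudOrTop p (.branch n₁ n oi oh)
  | .extended p s oi, n => goUpToBudOrTop p (.extender s n oi)
  | .budded p oi oh, n => (p, .bud (some n) oi oh)

theorem goUpToBudOrTop_len_le (p : ZPath α ι η) :
    ∀ n : PNode α ι η, (goUpToBudOrTop p n).1.len ≤ p.len := by
  induction p with
  | top => intro n; simp [goUpToBudOrTop, ZPath.len]
  | left p n₂ oi oh ih =>
      intro n
      simp only [goUpToBudOrTop, ZPath.len]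
      exact le_trans (ih _) (Nat.le_succ _)
  | right n₁ p oi oh ih =>
      intro n
      simp only [goUpToBudOrTop, ZPath.len]
      exact le_trans (ih _) (Nat.le_succ _)
  | extended p s oi ih =>
      intro n
      simp only [goUpToBudOrTop, ZPath.len]
      exact le_trans (ih _) (Nat.le_succ _)
  | budded p oi oh ih =>
      intro n
      simp only [goUpToBudOrTop, ZPath.len]
      exact Nat.le_succ _

/-- The concatenation of the labels of the frames between the nearest enclosing
`Budded` frame (or the top) and the cursor: `L` for a `Left` frame, `R` for a
`Right` frame, the key `s` for an `Extended` frame. -/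
def keyToNearestBud : ZPath α ι η → Key
  | .top => []
  | .budded _ _ _ => []
  | .left p _ _ _ => keyToNearestBud p ++ [Side.L]
  | .right _ p _ _ => keyToNearestBud p ++ [Side.R]
  | .extended p s _ => keyToNearestBud p ++ s

/-- Turn a node into a `Bud` if it is not one already. -/
def budify : PNode α ι η → PNode α ι η
  | .bud oc oi oh => .bud oc oi oh
  | .leaf v oi oh => .bud (some (.leaf v oi oh)) none none
  | .branch l r oi oh => .bud (some (.branch l r oi oh)) none none
  | .extender s n oi => .bud (some (.extender s n oi)) none none

/-- One entry of `modelize_path` for a non-`Top` path `p`: the key from the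
nearest enclosing bud to the cursor, together with the model of that bud with
the entry at this key (the dummy node) removed. -/
def modelizePathEntry [Inhabited α] (p : ZPath α ι η) :
    Key × List (Key × NestedValue α) :=
  let n₀ := (goUpToBudOrTop p (.leaf default none none)).2
  let κ := keyToNearestBud p
  (κ, (modelizeNode (budify n₀)).eraseP (fun e => decide (e.1 = κ)))

/-- `modelize_path`. -/
def modelizePath [Inhabited α] :
    ZPath α ι η → List (Key × List (Key × NestedValue α))
  | .top => []
  | .left p' n' oi oh =>
      modelizePathEntry (ZPath.left p' n' oi oh) ::
        modelizePath (goUpToBudOrTop (ZPath.left p' n' oi oh)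
          (PNode.leaf default none none)).1
  | .right n' p' oi oh =>
      modelizePathEntry (ZPath.right n' p' oi oh) ::
        modelizePath (goUpToBudOrTop (ZPath.right n' p' oi oh)
          (PNode.leaf default none none)).1
  | .extended p' s oi =>
      modelizePathEntry (ZPath.extended p' s oi) ::
        modelizePath (goUpToBudOrTop (ZPath.extended p' s oi)
          (PNode.leaf default none none)).1
  | .budded p' oi oh =>
      modelizePathEntry (ZPath.budded p' oi oh) ::
        modelizePath (goUpToBudOrTop (ZPath.budded p' oi oh)
          (PNode.leaf default none none)).1
termination_by p => p.len
decreasing_by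
  all_goals
    simp only [goUpToBudOrTop, ZPath.len]
    first
      | exact Nat.lt_succ_of_le (goUpToBudOrTop_len_le _ _)
      | exact Nat.lt_succ_of_le le_rfl

section Aux

variable {α ι η : Type}

/-! ### Order facts about sides and keys -/

instance : IsIrrefl Side Side.lt :=
  ⟨by rintro a ⟨rfl, h⟩; exact Side.noConfusion h⟩

instance : IsTrans Side Side.lt :=
  ⟨by rintro a b c ⟨rfl, rfl⟩ ⟨h, _⟩; exact Side.noConfusion h⟩

instance : IsTrichotomous Side Side.lt :=
  ⟨by intro a b; cases a <;> cases b <;> simp [Side.lt]⟩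

instance : IsStrictTotalOrder Side Side.lt := {}

instance : DecidableRel Side.lt := fun a b =>
  decidable_of_iff (a = Side.L ∧ b = Side.R) Iff.rfl

instance : DecidableRel keyLt :=
  inferInstanceAs (DecidableRel (List.Lex Side.lt))

lemma keyLt_trans {a b c : Key} (h1 : keyLt a b) (h2 : keyLt b c) : keyLt a c :=
  List.lex_trans (fun h1 h2 => trans_of Side.lt h1 h2) h1 h2

lemma key_tri (a b : Key) : a = b ∨ keyLt a b ∨ keyLt b a := by
  rcases trichotomous_of (List.Lex Side.lt) a b with h | h | h
  · exact Or.inr (Or.inl h)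
  · exact Or.inl h
  · exact Or.inr (Or.inr h)

lemma keyLt_append_iff (s : Key) {a b : Key} : keyLt (s ++ a) (s ++ b) ↔ keyLt a b := by
  induction s with
  | nil => exact Iff.rfl
  | cons x s ih =>
      show List.Lex Side.lt (x :: (s ++ a)) (x :: (s ++ b)) ↔ _
      rw [List.lex_cons_iff]; exact ih

lemma keyLt_LR (a b : Key) : keyLt (Side.L :: a) (Side.R :: b) :=
  List.Lex.rel ⟨rfl, rfl⟩

lemma not_keyLt_RL (a b : Key) : ¬ keyLt (Side.R :: a) (Side.L :: b) := by
  intro h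
  cases h with
  | rel h => exact Side.noConfusion h.1

end Aux
section Aux2

variable {α ι η : Type}

/-! ### Model helper lemmas -/

lemma prependAll_nil_key {β : Type _} (m : List (Key × β)) : prependAll [] m = m := by
  simp [prependAll]

lemma prependAll_prependAll {β : Type _} (s s' : Key) (m : List (Key × β)) :
    prependAll s (prependAll s' m) = prependAll (s ++ s') m := by
  simp [prependAll, List.map_map, Function.comp, List.append_assoc]

lemma map_fst_prependAll {β : Type _} (s : Key) (m : List (Key × β)) :
    (prependAll s m).map Prod.fst = (m.map Prod.fst).map (s ++ ·) := by
  simp [prependAll, List.map_map]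

def keysM (t : PNode α ι η) : List Key := (modelizeNodeAux t).map Prod.fst

lemma modelAux_ne_nil : ∀ t : PNode α ι η, modelizeNodeAux t ≠ []
  | .leaf _ _ _ => by simp [modelizeNodeAux]
  | .branch l r _ _ => by
      simp only [modelizeNodeAux]
      intro h
      rcases List.append_eq_nil_iff.mp h with ⟨h1, _⟩
      exact modelAux_ne_nil l (by simpa [prependAll] using h1)
  | .extender s t _ => by
      simp only [modelizeNodeAux]
      intro h
      exact modelAux_ne_nil t (by simpa [prependAll] using h)
  | .bud none _ _ => by simp [modelizeNodeAux]
  | .bud (some _) _ _ => by simp [modelizeNodeAux]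

lemma keysM_ne_nil (t : PNode α ι η) : keysM t ≠ [] := by
  simp [keysM, modelAux_ne_nil t]

lemma keysM_branch (l r : PNode α ι η) (oi : Option ι) (oh : Option η) :
    keysM (.branch l r oi oh) =
      (keysM l).map (Side.L :: ·) ++ (keysM r).map (Side.R :: ·) := by
  simp [keysM, modelizeNodeAux, map_fst_prependAll]

lemma keysM_extender (s : Key) (t : PNode α ι η) (oi : Option ι) :
    keysM (.extender s t oi) = (keysM t).map (s ++ ·) := by
  simp [keysM, modelizeNodeAux, map_fst_prependAll]

lemma keysM_leaf (v : α) (oi : Option ι) (oh : Option η) :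
    keysM (.leaf v oi oh : PNode α ι η) = [[]] := rfl

lemma keysM_bud (oc : Option (PNode α ι η)) (oi : Option ι) (oh : Option η) :
    keysM (.bud oc oi oh) = [[]] := by
  cases oc <;> rfl

/-- Good key lists for all trees. -/
lemma keys_good : ∀ t : PNode α ι η,
    List.Pairwise keyLt (keysM t) ∧
    List.Pairwise (fun a b => ¬ a <+: b ∧ ¬ b <+: a) (keysM t)
  | .leaf _ _ _ => by simp [keysM_leaf]
  | .bud oc _ _ => by simp [keysM_bud]
  | .extender s t _ => by
      rcases keys_good t with ⟨h1, h2⟩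
      rw [keysM_extender]
      constructor
      · exact (List.pairwise_map).mpr (h1.imp (fun h => List.Lex.append_left _ h _))
      · refine (List.pairwise_map).mpr (h2.imp ?_)
        rintro a b ⟨hab, hba⟩
        exact ⟨fun h => hab ((List.prefix_append_right_inj s).mp h),
               fun h => hba ((List.prefix_append_right_inj s).mp h)⟩
  | .branch l r _ _ => by
      rcases keys_good l with ⟨hl1, hl2⟩
      rcases keys_good r with ⟨hr1, hr2⟩
      rw [keysM_branch]
      have consmono : ∀ (x : Side) (a b : Key), keyLt a b → keyLt (x :: a) (x :: b) :=
        fun x a b h => List.Lex.cons h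
      have conspre : ∀ (x : Side) (a b : Key), (x :: a <+: x :: b) → a <+: b := by
        intro x a b h; exact (List.cons_prefix_cons.mp h).2
      constructor
      · rw [List.pairwise_append]
        refine ⟨(List.pairwise_map).mpr (hl1.imp (consmono _ _ _)),
                (List.pairwise_map).mpr (hr1.imp (consmono _ _ _)), ?_⟩
        rintro a ha b hb
        rcases List.mem_map.mp ha with ⟨a', _, rfl⟩
        rcases List.mem_map.mp hb with ⟨b', _, rfl⟩
        exact keyLt_LR a' b'
      · rw [List.pairwise_append]
        refine ⟨(List.pairwise_map).mpr (hl2.imp ?_),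
                (List.pairwise_map).mpr (hr2.imp ?_), ?_⟩
        · rintro a b ⟨hab, hba⟩
          exact ⟨fun h => hab (conspre _ _ _ h), fun h => hba (conspre _ _ _ h)⟩
        · rintro a b ⟨hab, hba⟩
          exact ⟨fun h => hab (conspre _ _ _ h), fun h => hba (conspre _ _ _ h)⟩
        · rintro a ha b hb
          rcases List.mem_map.mp ha with ⟨a', _, rfl⟩
          rcases List.mem_map.mp hb with ⟨b', _, rfl⟩
          refine ⟨fun h => ?_, fun h => ?_⟩
          · exact Side.noConfusion (List.cons_prefix_cons.mp h).1
          · exact Side.noConfusion (List.cons_prefix_cons.mp h).1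

end Aux2
section Aux3

variable {α ι η : Type}

/-! ### Sorted insertion into the model -/

def insS (k : Key) (v : α) : List (Key × NestedValue α) → List (Key × NestedValue α)
  | [] => [(k, .value v)]
  | e :: m => if keyLt k e.1 then (k, .value v) :: e :: m else e :: insS k v m

lemma insS_keys_mem (k : Key) (v : α) (a : Key) :
    ∀ m : List (Key × NestedValue α),
      a ∈ (insS k v m).map Prod.fst ↔ a = k ∨ a ∈ m.map Prod.fst
  | [] => by simp [insS]
  | e :: m => by
      by_cases h : keyLt k e.1 <;>
        simp [insS, h, insS_keys_mem k v a m] <;> tauto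

lemma insS_sorted (k : Key) (v : α) :
    ∀ m : List (Key × NestedValue α),
      List.Pairwise keyLt (m.map Prod.fst) →
      (∀ a ∈ m.map Prod.fst, a ≠ k) →
      List.Pairwise keyLt ((insS k v m).map Prod.fst)
  | [] => by simp [insS]
  | e :: m => by
      intro hs hne
      simp only [List.map_cons, List.pairwise_cons] at hs
      by_cases h : keyLt k e.1
      · simp only [insS, if_pos h, List.map_cons, List.pairwise_cons]
        refine ⟨?_, ?_⟩
        · intro a ha
          simp only [List.mem_cons] at ha
          rcases ha with rfl | ha
          · exact h
          · exact keyLt_trans h (hs.1 a ha)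
        · exact hs
      · simp only [insS, if_neg h, List.map_cons, List.pairwise_cons]
        refine ⟨?_, ?_⟩
        · intro a ha
          rcases (insS_keys_mem k v a m).mp ha with rfl | ha
          · rcases key_tri e.1 a with rfl | h' | h'
            · exact absurd rfl (hne e.1 (by simp))
            · exact h'
            · exact absurd h' h
          · exact hs.1 a ha
        · exact insS_sorted k v m hs.2 (fun a ha => hne a (by simp [ha]))

lemma insS_pf (k : Key) (v : α) :
    ∀ m : List (Key × NestedValue α),
      List.Pairwise (fun a b => ¬ a <+: b ∧ ¬ b <+: a) (m.map Prod.fst) →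
      (∀ a ∈ m.map Prod.fst, ¬ a <+: k ∧ ¬ k <+: a) →
      List.Pairwise (fun a b => ¬ a <+: b ∧ ¬ b <+: a) ((insS k v m).map Prod.fst)
  | [] => by simp [insS]
  | e :: m => by
      intro hs hpf
      simp only [List.map_cons, List.pairwise_cons] at hs
      by_cases h : keyLt k e.1
      · simp only [insS, if_pos h, List.map_cons, List.pairwise_cons]
        refine ⟨?_, hs⟩
        intro a ha
        simp only [List.mem_cons] at ha
        rcases ha with rfl | ha
        · have := hpf e.1 (by rw [List.map_cons]; exact List.mem_cons_self)
          exact ⟨this.2, this.1⟩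
        · have := hpf a (by rw [List.map_cons]; exact List.mem_cons_of_mem _ ha)
          exact ⟨this.2, this.1⟩
      · simp only [insS, if_neg h, List.map_cons, List.pairwise_cons]
        refine ⟨?_, insS_pf k v m hs.2 (fun a ha => hpf a (by simp [ha]))⟩
        intro a ha
        rcases (insS_keys_mem k v a m).mp ha with rfl | ha
        · exact hpf e.1 (by simp)
        · exact hs.1 a ha

lemma lookupA_cons {β : Type _} (e : Key × β) (m : List (Key × β)) (k : Key) :
    lookupA (e :: m) k = if e.1 = k then some e.2 else lookupA m k := by
  by_cases h : e.1 = k <;> simp [lookupA, List.find?_cons, h]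

lemma insS_lookup_self (k : Key) (v : α) :
    ∀ m : List (Key × NestedValue α),
      (∀ a ∈ m.map Prod.fst, a ≠ k) →
      lookupA (insS k v m) k = some (.value v)
  | [] => by simp [insS, lookupA]
  | e :: m => by
      intro hne
      by_cases h : keyLt k e.1
      · simp [insS, if_pos h, lookupA_cons]
      · have he : ¬ (e.1 = k) := hne e.1 (by simp)
        rw [show insS k v (e :: m) = e :: insS k v m by simp [insS, if_neg h],
            lookupA_cons, if_neg he]
        exact insS_lookup_self k v m (fun a ha => hne a (by rw [List.map_cons]; exact List.mem_cons_of_mem _ ha))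

lemma insS_lookup_ne (k : Key) (v : α) (k' : Key) (hne : k' ≠ k) :
    ∀ m : List (Key × NestedValue α),
      lookupA (insS k v m) k' = lookupA m k'
  | [] => by
      rw [show insS k v [] = [(k, .value v)] from rfl, lookupA_cons,
          if_neg (fun h => hne (h.symm))]
  | e :: m => by
      by_cases h : keyLt k e.1
      · rw [show insS k v (e :: m) = (k, .value v) :: e :: m by simp [insS, if_pos h],
            lookupA_cons, if_neg (fun hh => hne (hh.symm))]
      · rw [show insS k v (e :: m) = e :: insS k v m by simp [insS, if_neg h],
            lookupA_cons, lookupA_cons]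
        by_cases he : e.1 = k'
        · simp [he]
        · simp only [if_neg he]
          exact insS_lookup_ne k v k' hne m

lemma insS_prependAll (s k : Key) (v : α) :
    ∀ m : List (Key × NestedValue α),
      insS (s ++ k) v (prependAll s m) = prependAll s (insS k v m)
  | [] => by simp [insS, prependAll]
  | e :: m => by
      have hiff := keyLt_append_iff s (a := k) (b := e.1)
      by_cases h : keyLt k e.1
      · simp [insS, prependAll, if_pos h, if_pos (hiff.mpr h)]
      · have h' : ¬ keyLt (s ++ k) (s ++ e.1) := fun hh => h (hiff.mp hh)
        simp only [prependAll, List.map_cons] at *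
        simp only [insS, if_neg h, if_neg h', List.map_cons]
        rw [show (List.map (fun e => (s ++ e.1, e.2)) (insS k v m)) = prependAll s (insS k v m) from rfl,
            ← insS_prependAll s k v m]
        rfl

lemma insS_append_lt (k : Key) (v : α) :
    ∀ (A B : List (Key × NestedValue α)), (∀ e ∈ B, keyLt k e.1) →
      insS k v (A ++ B) = insS k v A ++ B
  | [], B => by
      intro h
      cases B with
      | nil => rfl
      | cons b B => simp [insS, if_pos (h b (by simp))]
  | a :: A, B => by
      intro h
      by_cases ha : keyLt k a.1
      · simp [insS, if_pos ha]
      · simp only [List.cons_append, insS, if_neg ha, List.cons.injEq, true_and]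
        exact insS_append_lt k v A B h

lemma insS_append_ge (k : Key) (v : α) :
    ∀ (A B : List (Key × NestedValue α)), (∀ e ∈ A, ¬ keyLt k e.1) →
      insS k v (A ++ B) = A ++ insS k v B
  | [], B => by intro _; rfl
  | a :: A, B => by
      intro h
      simp only [List.cons_append, insS, if_neg (h a (by simp)), List.cons.injEq, true_and]
      exact insS_append_ge k v A B (fun e he => h e (by simp [he]))

end Aux3
section Aux4

variable {α ι η : Type}

/-! ### The insertion function -/

def ksplit : Key → Key → Key × Key × Key
  | a :: k, b :: s =>
      if a = b then ((a :: (ksplit k s).1, (ksplit k s).2))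
      else ([], a :: k, b :: s)
  | k, s => ([], k, s)

lemma ksplit_spec : ∀ k s : Key,
    k = (ksplit k s).1 ++ (ksplit k s).2.1 ∧
    s = (ksplit k s).1 ++ (ksplit k s).2.2 ∧
    (∀ d x' e y', (ksplit k s).2.1 = d :: x' → (ksplit k s).2.2 = e :: y' → d ≠ e)
  | [], s => by simp [ksplit]
  | a :: k, [] => by simp [ksplit]
  | a :: k, b :: s => by
      rcases ksplit_spec k s with ⟨h1, h2, h3⟩
      by_cases h : a = b
      · subst h
        simp only [ksplit, eq_self_iff_true, if_true]
        exact ⟨by rw [List.cons_append, ← h1], by rw [List.cons_append, ← h2], h3⟩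
      · simp only [ksplit, if_neg h]
        refine ⟨rfl, rfl, ?_⟩
        rintro d x' e y' hd hy
        injection hd with hd1 _
        injection hy with hy1 _
        rw [← hd1, ← hy1]; exact h

def PNode.getHash : PNode α ι η → Option η
  | .leaf _ _ oh => oh
  | .branch _ _ _ oh => oh
  | .extender _ t _ => t.getHash
  | .bud _ _ oh => oh

lemma hashed_iff_getHash : ∀ t : PNode α ι η, t.hashed ↔ (PNode.getHash t).isSome = true
  | .leaf _ _ _ => Iff.rfl
  | .branch _ _ _ _ => Iff.rfl
  | .bud _ _ _ => Iff.rfl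
  | .extender _ t _ => hashed_iff_getHash t

def wrapE (gi : Option ι) : Key → PNode α ι η → PNode α ι η
  | [], t => t
  | s@(_ :: _), t => .extender s t gi

lemma wrapE_model (gi : Option ι) (s : Key) (t : PNode α ι η) :
    modelizeNodeAux (wrapE gi s t) = prependAll s (modelizeNodeAux t) := by
  cases s with
  | nil => rw [prependAll_nil_key]; rfl
  | cons a s => rfl

lemma wrapE_hashed (gi : Option ι) (s : Key) (t : PNode α ι η) :
    (wrapE gi s t).hashed ↔ t.hashed := by
  cases s with
  | nil => exact Iff.rfl
  | cons a s => exact Iff.rfl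

lemma wrapE_inv (gi : Option ι) (s : Key) (t : PNode α ι η)
    (h1 : ¬ t.isExtender) (h2 : gi.isSome → t.hashed) (h3 : gi.isSome → t.indexed)
    (ht : t.inv) : (wrapE gi s t).inv := by
  cases s with
  | nil => exact ht
  | cons a s => exact ⟨h1, by simp, h2, h3, ht⟩

def insNode (v : α) : PNode α ι η → Key → PNode α ι η
  | .branch l r oi oh, .L :: k' => .branch (insNode v l k') r oi oh
  | .branch l r oi oh, .R :: k' => .branch l (insNode v r k') oi oh
  | .extender s t oi, k =>
      match ksplit k s with
      | (_, x, []) => .extender s (insNode v t x) oi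
      | (_, [], _ :: _) => .extender s t oi
      | (c, .L :: x', _ :: y') =>
          wrapE oi c (.branch (wrapE oi x' (.leaf v oi t.getHash)) (wrapE oi y' t)
            oi t.getHash)
      | (c, .R :: x', _ :: y') =>
          wrapE oi c (.branch (wrapE oi y' t) (wrapE oi x' (.leaf v oi t.getHash))
            oi t.getHash)
  | t, _ => t

end Aux4
section Aux5

variable {α ι η : Type}

lemma insNode_ext (v : α) (s : Key) (t : PNode α ι η) (oi : Option ι) (k : Key) :
    insNode v (.extender s t oi) k =
      match ksplit k s with
      | (_, x, []) => .extender s (insNode v t x) oi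
      | (_, [], _ :: _) => .extender s t oi
      | (c, .L :: x', _ :: y') =>
          wrapE oi c (.branch (wrapE oi x' (.leaf v oi t.getHash)) (wrapE oi y' t)
            oi t.getHash)
      | (c, .R :: x', _ :: y') =>
          wrapE oi c (.branch (wrapE oi y' t) (wrapE oi x' (.leaf v oi t.getHash))
            oi t.getHash) := rfl

lemma wrapE_not_bud (gi : Option ι) (s : Key) {t : PNode α ι η} (h : ¬ t.isBud) :
    ¬ (wrapE gi s t).isBud := by
  cases s with
  | nil => exact h
  | cons a s => exact fun h' => h'

lemma wrapE_not_leaf (gi : Option ι) (s : Key) {t : PNode α ι η} (h : ¬ t.isLeaf) :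
    ¬ (wrapE gi s t).isLeaf := by
  cases s with
  | nil => exact h
  | cons a s => exact fun h' => h'

lemma wrapE_indexed_of (gi : Option ι) (s : Key) (t : PNode α ι η)
    (h : gi.isSome = true → t.indexed) : gi.isSome = true → (wrapE gi s t).indexed := by
  cases s with
  | nil => exact h
  | cons a s => exact fun hg => hg

lemma wrapE_indexed_to (gi : Option ι) (s : Key) (t : PNode α ι η)
    (h : t.indexed → gi.isSome = true) : (wrapE gi s t).indexed → gi.isSome = true := by
  cases s with
  | nil => exact h
  | cons a s => exact fun hg => hg

/-- Main correctness lemma for `insNode`. -/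
lemma insNode_spec (v : α) : ∀ (t : PNode α ι η) (k : Key), t.inv →
    k ∉ keysM t → (∀ a ∈ keysM t, ¬ a <+: k ∧ ¬ k <+: a) →
    (insNode v t k).inv ∧ ¬ (insNode v t k).isBud ∧ ¬ (insNode v t k).isLeaf ∧
      ((insNode v t k).isExtender → t.isExtender) ∧
      ((insNode v t k).hashed ↔ t.hashed) ∧ ((insNode v t k).indexed ↔ t.indexed) ∧
      modelizeNodeAux (insNode v t k) = insS k v (modelizeNodeAux t)
  | .leaf v0 oi oh, k, _, _, hpf =>
      (((hpf [] (by simp [keysM_leaf])).1) List.nil_prefix).elim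
  | .bud oc oi oh, k, _, _, hpf =>
      (((hpf [] (by simp [keysM_bud])).1) List.nil_prefix).elim
  | .branch l r oi oh, [], _, _, hpf => by
      obtain ⟨a, ha⟩ := List.exists_mem_of_ne_nil _ (keysM_ne_nil (.branch l r oi oh))
      exact (((hpf a ha).2) List.nil_prefix).elim
  | .branch l r oi oh, .L :: k', hinv, hmem, hpf => by
      obtain ⟨hSI3, hSI4, hSI5, hlinv, hrinv⟩ := hinv
      have hm' : k' ∉ keysM l := fun h => hmem (by
        rw [keysM_branch]; exact List.mem_append_left _ (List.mem_map.mpr ⟨k', h, rfl⟩))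
      have hpf' : ∀ a ∈ keysM l, ¬ a <+: k' ∧ ¬ k' <+: a := by
        intro a ha
        have := hpf (Side.L :: a) (by
          rw [keysM_branch]; exact List.mem_append_left _ (List.mem_map.mpr ⟨a, ha, rfl⟩))
        exact ⟨fun h => this.1 (List.cons_prefix_cons.mpr ⟨rfl, h⟩),
               fun h => this.2 (List.cons_prefix_cons.mpr ⟨rfl, h⟩)⟩
      obtain ⟨Iinv, Inb, Inl, Iext, Ihash, Iidx, Imod⟩ := insNode_spec v l k' hlinv hm' hpf'
      refine ⟨⟨fun h => ⟨Ihash.mpr (hSI3 h).1, (hSI3 h).2⟩, hSI4,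
               fun h => ⟨Iidx.mpr (hSI5 h).1, (hSI5 h).2⟩, Iinv, hrinv⟩,
              fun h => h, fun h => h, fun h => h.elim, Iff.rfl, Iff.rfl, ?_⟩
      show prependAll [Side.L] (modelizeNodeAux (insNode v l k')) ++
            prependAll [Side.R] (modelizeNodeAux r)
          = insS (Side.L :: k') v
              (prependAll [Side.L] (modelizeNodeAux l) ++
                prependAll [Side.R] (modelizeNodeAux r))
      rw [Imod, insS_append_lt _ v _ _ ?hb]
      case hb =>
        intro e he
        rcases List.mem_map.mp he with ⟨e', _, rfl⟩
        exact keyLt_LR _ _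
      rw [show (Side.L :: k' : Key) = [Side.L] ++ k' from rfl, insS_prependAll]
  | .branch l r oi oh, .R :: k', hinv, hmem, hpf => by
      obtain ⟨hSI3, hSI4, hSI5, hlinv, hrinv⟩ := hinv
      have hm' : k' ∉ keysM r := fun h => hmem (by
        rw [keysM_branch]; exact List.mem_append_right _ (List.mem_map.mpr ⟨k', h, rfl⟩))
      have hpf' : ∀ a ∈ keysM r, ¬ a <+: k' ∧ ¬ k' <+: a := by
        intro a ha
        have := hpf (Side.R :: a) (by
          rw [keysM_branch]; exact List.mem_append_right _ (List.mem_map.mpr ⟨a, ha, rfl⟩))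
        exact ⟨fun h => this.1 (List.cons_prefix_cons.mpr ⟨rfl, h⟩),
               fun h => this.2 (List.cons_prefix_cons.mpr ⟨rfl, h⟩)⟩
      obtain ⟨Iinv, Inb, Inl, Iext, Ihash, Iidx, Imod⟩ := insNode_spec v r k' hrinv hm' hpf'
      refine ⟨⟨fun h => ⟨(hSI3 h).1, Ihash.mpr (hSI3 h).2⟩, hSI4,
               fun h => ⟨(hSI5 h).1, Iidx.mpr (hSI5 h).2⟩, hlinv, Iinv⟩,
              fun h => h, fun h => h, fun h => h.elim, Iff.rfl, Iff.rfl, ?_⟩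
      show prependAll [Side.L] (modelizeNodeAux l) ++
            prependAll [Side.R] (modelizeNodeAux (insNode v r k'))
          = insS (Side.R :: k') v
              (prependAll [Side.L] (modelizeNodeAux l) ++
                prependAll [Side.R] (modelizeNodeAux r))
      rw [Imod, insS_append_ge _ v _ _ ?hb]
      case hb =>
        intro e he
        rcases List.mem_map.mp he with ⟨e', _, rfl⟩
        exact not_keyLt_RL _ _
      rw [show (Side.R :: k' : Key) = [Side.R] ++ k' from rfl, insS_prependAll]
  | .extender s t oi, k, hinv, hmem, hpf => by
      obtain ⟨hne, hsne, hH, hI, hti⟩ := hinv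
      obtain ⟨hk1, hk2, hk3⟩ := ksplit_spec k s
      rcases hsp : ksplit k s with ⟨c, x, y⟩
      rw [hsp] at hk1 hk2 hk3
      simp only at hk1 hk2 hk3
      rcases y with _ | ⟨e, y'⟩
      · -- y = [] : descend into the extender's child
        have hc : s = c := by simpa using hk2
        subst hc
        have hred : insNode v (.extender s t oi) k = .extender s (insNode v t x) oi := by
          rw [insNode_ext, hsp]
        have hxm : x ∉ keysM t := fun h => hmem (by
          rw [keysM_extender, hk1]; exact List.mem_map.mpr ⟨x, h, rfl⟩)
        have hxpf : ∀ a ∈ keysM t, ¬ a <+: x ∧ ¬ x <+: a := by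
          intro a ha
          have := hpf (s ++ a) (by rw [keysM_extender]; exact List.mem_map.mpr ⟨a, ha, rfl⟩)
          rw [hk1] at this
          exact ⟨fun h => this.1 ((List.prefix_append_right_inj s).mpr h),
                 fun h => this.2 ((List.prefix_append_right_inj s).mpr h)⟩
        obtain ⟨Iinv, Inb, Inl, Iext, Ihash, Iidx, Imod⟩ := insNode_spec v t x hti hxm hxpf
        rw [hred]
        refine ⟨⟨fun h => hne (Iext h), hsne, fun h => Ihash.mpr (hH h),
                 fun h => Iidx.mpr (hI h), Iinv⟩,
                fun h => h, fun h => h, fun _ => trivial, Ihash, Iff.rfl, ?_⟩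
        show prependAll s (modelizeNodeAux (insNode v t x))
            = insS k v (prependAll s (modelizeNodeAux t))
        rw [Imod, hk1, insS_prependAll]
      rcases x with _ | ⟨d, x'⟩
      · -- x = [], y ≠ [] : the key is a strict prefix of existing keys; impossible
        obtain ⟨a, ha⟩ := List.exists_mem_of_ne_nil _ (keysM_ne_nil t)
        have hmem2 : s ++ a ∈ keysM (.extender s t oi) := by
          rw [keysM_extender]; exact List.mem_map.mpr ⟨a, ha, rfl⟩
        refine absurd ?_ ((hpf _ hmem2).2)
        rw [hk2, show k = c by simpa using hk1, List.append_assoc]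
        exact List.prefix_append _ _
      · -- genuine split
        have hde : d ≠ e := hk3 d x' e y' rfl rfl
        have ghh : t.hashed ↔ (PNode.getHash t).isSome = true := hashed_iff_getHash t
        have oihh : oi.isSome = true → (PNode.getHash t).isSome = true :=
          fun h => ghh.mp (hH h)
        cases d
        · -- d = L, hence e = R
          cases e
          · exact absurd rfl hde
          have hred : insNode v (.extender s t oi) k =
              wrapE oi c (.branch (wrapE oi x' (.leaf v oi t.getHash)) (wrapE oi y' t)
                oi t.getHash) := by
            rw [insNode_ext, hsp]
          have LFinv : (wrapE oi x' (.leaf v oi t.getHash) : PNode α ι η).inv :=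
            wrapE_inv _ _ _ (fun h => h) (fun h => oihh h) (fun h => h) trivial
          have OTinv : (wrapE oi y' t).inv := wrapE_inv _ _ _ hne hH hI hti
          have Binv : (PNode.branch (wrapE oi x' (.leaf v oi t.getHash)) (wrapE oi y' t)
              oi t.getHash).inv := by
            refine ⟨fun h => ⟨(wrapE_hashed _ _ _).mpr h, (wrapE_hashed _ _ _).mpr (ghh.mpr h)⟩,
                    oihh, fun h => ⟨wrapE_indexed_of _ _ _ (fun _ => h) h,
                                    wrapE_indexed_of _ _ _ hI h⟩, LFinv, OTinv⟩
          rw [hred]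
          refine ⟨wrapE_inv _ _ _ (fun h => h) (fun h => oihh h) (fun h => h) Binv,
                  wrapE_not_bud _ _ (fun h => h), wrapE_not_leaf _ _ (fun h => h),
                  fun _ => trivial, ?_, ?_, ?_⟩
          · rw [wrapE_hashed]
            show (PNode.getHash t).isSome = true ↔ t.hashed
            exact ghh.symm
          · constructor
            · exact wrapE_indexed_to _ _ _ (fun h => h)
            · exact wrapE_indexed_of _ _ _ (fun h => h)
          · -- model equation
            rw [wrapE_model]
            show prependAll c
                (modelizeNodeAux (PNode.branch (wrapE oi x' (.leaf v oi t.getHash))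
                  (wrapE oi y' t) oi t.getHash))
              = insS k v (prependAll s (modelizeNodeAux t))
            rw [show modelizeNodeAux (PNode.branch (wrapE oi x' (.leaf v oi t.getHash))
                  (wrapE oi y' t) oi t.getHash)
                = prependAll [Side.L] (modelizeNodeAux (wrapE oi x' (.leaf v oi t.getHash)))
                  ++ prependAll [Side.R] (modelizeNodeAux (wrapE oi y' t)) from rfl,
               wrapE_model, wrapE_model,
               show modelizeNodeAux (.leaf v oi t.getHash : PNode α ι η)
                  = [([], NestedValue.value v)] from rfl,
               prependAll_prependAll, prependAll_prependAll, List.singleton_append,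
               List.singleton_append, hk1, hk2, ← prependAll_prependAll, insS_prependAll]
            have hinner : insS (Side.L :: x') v (prependAll (Side.R :: y') (modelizeNodeAux t))
                = (Side.L :: x', NestedValue.value v)
                    :: prependAll (Side.R :: y') (modelizeNodeAux t) := by
              have hb : ∀ e ∈ prependAll (Side.R :: y') (modelizeNodeAux t),
                  keyLt (Side.L :: x') e.1 := by
                intro e he
                rcases List.mem_map.mp he with ⟨e', _, rfl⟩
                exact keyLt_LR _ _
              simpa [insS] using insS_append_lt (Side.L :: x') v [] _ hb
            rw [hinner]
            simp [prependAll]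
        · -- d = R, hence e = L
          cases e
          case R => exact absurd rfl hde
          have hred : insNode v (.extender s t oi) k =
              wrapE oi c (.branch (wrapE oi y' t) (wrapE oi x' (.leaf v oi t.getHash))
                oi t.getHash) := by
            rw [insNode_ext, hsp]
          have LFinv : (wrapE oi x' (.leaf v oi t.getHash) : PNode α ι η).inv :=
            wrapE_inv _ _ _ (fun h => h) (fun h => oihh h) (fun h => h) trivial
          have OTinv : (wrapE oi y' t).inv := wrapE_inv _ _ _ hne hH hI hti
          have Binv : (PNode.branch (wrapE oi y' t) (wrapE oi x' (.leaf v oi t.getHash))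
              oi t.getHash).inv := by
            refine ⟨fun h => ⟨(wrapE_hashed _ _ _).mpr (ghh.mpr h), (wrapE_hashed _ _ _).mpr h⟩,
                    oihh, fun h => ⟨wrapE_indexed_of _ _ _ hI h,
                                    wrapE_indexed_of _ _ _ (fun _ => h) h⟩, OTinv, LFinv⟩
          rw [hred]
          refine ⟨wrapE_inv _ _ _ (fun h => h) (fun h => oihh h) (fun h => h) Binv,
                  wrapE_not_bud _ _ (fun h => h), wrapE_not_leaf _ _ (fun h => h),
                  fun _ => trivial, ?_, ?_, ?_⟩
          · rw [wrapE_hashed]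
            show (PNode.getHash t).isSome = true ↔ t.hashed
            exact ghh.symm
          · constructor
            · exact wrapE_indexed_to _ _ _ (fun h => h)
            · exact wrapE_indexed_of _ _ _ (fun h => h)
          · rw [wrapE_model]
            show prependAll c
                (modelizeNodeAux (PNode.branch (wrapE oi y' t)
                  (wrapE oi x' (.leaf v oi t.getHash)) oi t.getHash))
              = insS k v (prependAll s (modelizeNodeAux t))
            rw [show modelizeNodeAux (PNode.branch (wrapE oi y' t)
                  (wrapE oi x' (.leaf v oi t.getHash)) oi t.getHash)
                = prependAll [Side.L] (modelizeNodeAux (wrapE oi y' t))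
                  ++ prependAll [Side.R] (modelizeNodeAux (wrapE oi x' (.leaf v oi t.getHash)))
                  from rfl,
               wrapE_model, wrapE_model,
               show modelizeNodeAux (.leaf v oi t.getHash : PNode α ι η)
                  = [([], NestedValue.value v)] from rfl,
               prependAll_prependAll, prependAll_prependAll, List.singleton_append,
               List.singleton_append, hk1, hk2, ← prependAll_prependAll, insS_prependAll]
            have hinner : insS (Side.R :: x') v (prependAll (Side.L :: y') (modelizeNodeAux t))
                = prependAll (Side.L :: y') (modelizeNodeAux t)
                    ++ [(Side.R :: x', NestedValue.value v)] := by
              have hb : ∀ e ∈ prependAll (Side.L :: y') (modelizeNodeAux t),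
                  ¬ keyLt (Side.R :: x') e.1 := by
                intro e he
                rcases List.mem_map.mp he with ⟨e', _, rfl⟩
                exact not_keyLt_RL _ _
              simpa [insS] using insS_append_ge (Side.R :: x') v _ [] hb
            rw [hinner]
            simp [prependAll]

end Aux5
section Aux6

variable {α ι η : Type}

def condD (m : List (Key × NestedValue α)) (k : Key) : Prop :=
  k ∉ m.map Prod.fst ∧
    ∀ a ∈ k :: m.map Prod.fst, ∀ b ∈ k :: m.map Prod.fst, a ≠ b → ¬ a <+: b

instance (m : List (Key × NestedValue α)) (k : Key) : Decidable (condD m k) := by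
  unfold condD; infer_instance

lemma condD_iff (m : List (Key × NestedValue α)) (k : Key) :
    condD m k ↔ (k ∉ m.map Prod.fst ∧
      PrefixFreeSet (insert k {x : Key | x ∈ m.map Prod.fst})) := by
  unfold condD PrefixFreeSet
  constructor
  · rintro ⟨h1, h2⟩
    exact ⟨h1, fun a ha b hb hne => h2 a (by
      rcases Set.mem_insert_iff.mp ha with h | h
      · simp [h]
      · exact List.mem_cons_of_mem _ h.out) b (by
      rcases Set.mem_insert_iff.mp hb with h | h
      · simp [h]
      · exact List.mem_cons_of_mem _ h.out) hne⟩
  · rintro ⟨h1, h2⟩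
    refine ⟨h1, fun a ha b hb hne => h2 a ?_ b ?_ hne⟩
    · rcases List.mem_cons.mp ha with rfl | h
      · exact Set.mem_insert _ _
      · exact Set.mem_insert_of_mem _ h
    · rcases List.mem_cons.mp hb with rfl | h
      · exact Set.mem_insert _ _
      · exact Set.mem_insert_of_mem _ h

def insTop (z : ZPath α ι η × PNode α ι η) (k : Key) (v : α) :
    Option (ZPath α ι η × PNode α ι η) :=
  match z with
  | (p, .bud oc oi oh) =>
      if condD (modelizeNode (.bud oc oi oh)) k then
        some (p, .bud (some (match oc with
          | none => .extender k (.leaf v oi oh) oi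
          | some t => insNode v t k)) oi oh)
      else none
  | _ => none

lemma modelizeNode_bud_none (oi : Option ι) (oh : Option η) :
    modelizeNode (.bud none oi oh : PNode α ι η) = [] := rfl

lemma modelizeNode_bud_some (t : PNode α ι η) (oi : Option ι) (oh : Option η) :
    modelizeNode (.bud (some t) oi oh) = modelizeNodeAux t := rfl

lemma connect_bud_congr (p : ZPath α ι η) (oc oc' : Option (PNode α ι η))
    (oi : Option ι) (oh : Option η) (h : p.connect (.bud oc oi oh)) :
    p.connect (.bud oc' oi oh) := by
  cases p with
  | top => trivial
  | left _ _ _ _ => exact h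
  | right _ _ _ _ => exact h
  | extended _ _ _ => exact ⟨h.1, h.2.1, fun hh => hh⟩
  | budded _ _ _ => exact absurd trivial h.2.2.1

end Aux6

/-- there is an `insert` function on budzippers satisfying the
functional requirements: on a budzipper satisfying the zipper invariants and a
nonempty key `k`, if `k` is fresh among the keys of the node's model and keeps
them prefix-free, it returns a budzipper satisfying the zipper invariants, with
the same path model, whose node model is the extension of the old one by
`{k ↦ Value v}`; otherwise it returns `none`. -/
theorem stmt13 {α ι η : Type} [Inhabited α] :
    ∃ ins : ZPath α ι η × PNode α ι η → Key → α →
        Option (ZPath α ι η × PNode α ι η),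
      ∀ (p : ZPath α ι η) (n : PNode α ι η), n.isBud → zipperInv p n →
        ∀ k : Key, k ≠ [] → ∀ v : α,
          ((k ∉ (modelizeNode n).map Prod.fst ∧
              PrefixFreeSet
                (insert k {x : Key | x ∈ (modelizeNode n).map Prod.fst})) →
            ∃ (p' : ZPath α ι η) (n' : PNode α ι η),
              ins (p, n) k v = some (p', n') ∧
              n'.isBud ∧ zipperInv p' n' ∧
              modelizePath p' = modelizePath p ∧
              GoodKeyList ((modelizeNode n').map Prod.fst) ∧
              lookupA (modelizeNode n') k = some (NestedValue.value v) ∧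
              (∀ k' : Key, k' ≠ k →
                lookupA (modelizeNode n') k' = lookupA (modelizeNode n) k')) ∧
          (¬ (k ∉ (modelizeNode n).map Prod.fst ∧
              PrefixFreeSet
                (insert k {x : Key | x ∈ (modelizeNode n).map Prod.fst})) →
            ins (p, n) k v = none) := by
  refine ⟨insTop, ?_⟩
  intro p n hb hz k hk v
  rcases n with ⟨v0, oi, oh⟩ | ⟨l, r, oi, oh⟩ | ⟨s, t, oi⟩ | ⟨oc, oi, oh⟩
  · exact hb.elim
  · exact hb.elim
  · exact hb.elim
  constructor
  · intro hc
    have hcd : condD (modelizeNode (.bud oc oi oh)) k := (condD_iff _ _).mpr hc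
    obtain ⟨hzn, hzp, hzc⟩ := hz
    cases oc with
    | none =>
        have hm : modelizeNode (.bud (some (.extender k (.leaf v oi oh) oi)) oi oh)
            = [(k, NestedValue.value v)] := by
          rw [modelizeNode_bud_some]
          simp [modelizeNodeAux, prependAll]
        refine ⟨p, .bud (some (.extender k (.leaf v oi oh) oi)) oi oh,
                by simp only [insTop, if_pos hcd], trivial, ?_, rfl, ?_, ?_, ?_⟩
        · refine ⟨?_, hzp, connect_bud_congr p none _ oi oh hzc⟩
          exact ⟨fun h => h, fun h => h, fun h => h, hzn, fun h => h,
                 fun h => h, hk, hzn, fun h => h, trivial⟩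
        · rw [hm]
          exact ⟨List.pairwise_singleton _ _, List.pairwise_singleton _ _⟩
        · rw [hm, lookupA_cons, if_pos rfl]
        · intro k' hk'
          rw [hm, lookupA_cons, if_neg (fun h => hk' h.symm)]
          rfl
    | some t =>
        obtain ⟨hnb, hnl, hbh, hio, hbi, htinv⟩ := hzn
        have hk1 : k ∉ keysM t := hc.1
        have hnek : ∀ a ∈ keysM t, a ≠ k := fun a ha h => hc.1 (h ▸ ha)
        have hpf : ∀ a ∈ keysM t, ¬ a <+: k ∧ ¬ k <+: a := by
          intro a ha
          have hane : a ≠ k := hnek a ha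
          exact ⟨hcd.2 a (List.mem_cons_of_mem _ ha) k List.mem_cons_self hane,
                 hcd.2 k List.mem_cons_self a (List.mem_cons_of_mem _ ha)
                   (Ne.symm hane)⟩
        obtain ⟨Iinv, Inb, Inl, Iext, Ihash, Iidx, Imod⟩ := insNode_spec v t k htinv hk1 hpf
        refine ⟨p, .bud (some (insNode v t k)) oi oh,
                by simp only [insTop, if_pos hcd], trivial, ?_, rfl, ?_, ?_, ?_⟩
        · exact ⟨⟨Inb, Inl, fun h => Ihash.mpr (hbh h), hio,
                  fun h => Iidx.mpr (hbi h), Iinv⟩, hzp,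
                 connect_bud_congr p (some t) _ oi oh hzc⟩
        · rw [modelizeNode_bud_some, Imod]
          exact ⟨insS_pf k v _ (keys_good t).2 hpf, insS_sorted k v _ (keys_good t).1 hnek⟩
        · rw [modelizeNode_bud_some, Imod]
          exact insS_lookup_self k v _ hnek
        · intro k' hk'
          rw [modelizeNode_bud_some, Imod, modelizeNode_bud_some]
          exact insS_lookup_ne k v k' hk' _
  · intro hnc
    have hnd : ¬ condD (modelizeNode (.bud oc oi oh)) k :=
      fun h => hnc ((condD_iff _ _).mp h)
    simp only [insTop, if_neg hnd]
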